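/- Let 𝔤 be a Lie algebra over ℂ with a non-degenerate symmetric invariant bilinear form ⟨·,·⟩, and let Γ be a group of automorphisms of (𝔤, ⟨·,·⟩) such that for any u, v ∈ 𝔤, [gu,v] = 0 and ⟨gu,v⟩ = 0 for all but finitely many g ∈ Γ. Then the assignment g·(a ⊗ p(t) + λk) = ga ⊗ p(g⁻¹(t)) + λk, for g ∈ Γ, a ∈ 𝔤, p(t) ∈ ℂ((t⁻¹)), λ ∈ ℂ (where g(t) := Ψ(g)(t) for a fixed group homomorphism Ψ: Γ → G), defines a left action of Γ on the Lie algebra ĝ(∞) = (𝔤 ⊗ ℂ((t⁻¹))) ⊕ ℂk by Lie algebra automorphisms, and for any u, v ∈ ĝ(∞) one has [gu, v] = 0 for all but finitely many g ∈ Γ. -/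

import Mathlib

open MvPolynomial

noncomputable section

/-- Generalized binomial coefficient `C(n, k)` for `n : ℤ`, as a complex number. -/
def zchoose (n : ℤ) (k : ℕ) : ℂ :=
  (∏ j ∈ Finset.range k, ((n : ℂ) - (j : ℂ))) / (Nat.factorial k : ℂ)

section TwoVar

variable {W : Type} [AddCommGroup W] [Module ℂ W]

/-- For a two-variable formal series `Σ F m n x₁^{-m-1} x₂^{-n-1}` with coefficients in a
ℂ-module, this is the coefficient of `x₁^{-m-1} x₂^{-n-1}` in its product with the
polynomial `p(x₁,x₂)`. -/
def polyMul (p : MvPolynomial (Fin 2) ℂ) (F : ℤ → ℤ → W) (m n : ℤ) : W :=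
  ∑ᶠ d : Fin 2 →₀ ℕ, p.coeff d • F (m + d 0) (n + d 1)

/-- For `A(x₁,x₂) = Σ F m n x₁^{-m-1} x₂^{-n-1}`, the coefficient of `x₀^{-k-1} x₂^{-l-1}`
in the substitution `A(x₂+x₀, x₂)`, where `(x₂+x₀)^{-m-1}` is expanded in nonnegative
powers of `x₀`.  It is nonzero only for `k < 0` (nonnegative powers of `x₀`). -/
def substX1 (F : ℤ → ℤ → W) (k l : ℤ) : W :=
  if k < 0 then ∑ᶠ m : ℤ, zchoose (-m-1) (-k-1).toNat • F m (l - m + k) else 0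

/-- `p(x₀+x₂, x₂)` as a polynomial in the variables `(x₀, x₂)`, for `p` a polynomial in
variables `(x₁, x₂)`. -/
def substPoly (p : MvPolynomial (Fin 2) ℂ) : MvPolynomial (Fin 2) ℂ :=
  MvPolynomial.aeval ![X 0 + X 1, X 1] p

end TwoVar

section Eo

variable {W : Type} [AddCommGroup W] [Module ℂ W]

/-- The identity operator `1_W`, viewed as the element `1_W x^0` of `ℰᵒ(W)`;
its coefficient at `x^{-n-1}` is `1` iff `n = -1`. -/
def idSeries : ℤ → Module.End ℂ W := fun n => if n = -1 then 1 else 0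

/-- `a(x) = Σ aₙ x^{-n-1}` lies in `ℰᵒ(W) = Hom(W, W((x⁻¹)))`:  for each `w`, the
coefficients `aₙ w` vanish for `n` sufficiently negative (finitely many positive
powers of `x`). -/
def IsEo (a : ℤ → Module.End ℂ W) : Prop := ∀ w : W, ∃ N : ℤ, ∀ n < N, a n w = 0

/-- `p(x₁,x₂) a(x₁) b(x₂) ∈ Hom(W, W((x₁⁻¹, x₂⁻¹)))`. -/
def Compat (p : MvPolynomial (Fin 2) ℂ) (a b : ℤ → Module.End ℂ W) : Prop :=
  ∀ w : W, ∃ N : ℤ, ∀ m n : ℤ, (m < N ∨ n < N) →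
    polyMul p (fun m n => a m (b n w)) m n = 0

/-- Weak associativity for the polynomial `p`:
`(p(x₁,x₂) a(x₁) b(x₂))|_{x₁ = x₂+x₀} = p(x₀+x₂,x₂) ⬝ Σ_{k,l} c k l x₀^{-k-1} x₂^{-l-1}`. -/
def AssocEq (p : MvPolynomial (Fin 2) ℂ) (a b : ℤ → Module.End ℂ W)
    (c : ℤ → ℤ → Module.End ℂ W) : Prop :=
  ∀ (w : W) (k l : ℤ),
    substX1 (polyMul p (fun m n => a m (b n w))) k l
      = polyMul (substPoly p) (fun k l => c k l w) k l

/-- `c` is the family of products `Y_{ℰᵒ}(a(x),x₀)b(x) = Σ_n (a(x)_n b(x)) x₀^{-n-1}`: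
`c n l` is the coefficient of `x^{-l-1}` in `a(x)_n b(x)`.  It is characterized by:
truncation in `x₀`, each `a(x)_n b(x) ∈ ℰᵒ(W)`, and for every nonzero compatible
polynomial `p`, `p(x+x₀,x) Y_{ℰᵒ}(a(x),x₀)b(x) = (p(x₁,x)a(x₁)b(x))|_{x₁=x+x₀}`. -/
def IsYEoProd (a b : ℤ → Module.End ℂ W) (c : ℤ → ℤ → Module.End ℂ W) : Prop :=
  (∀ w : W, ∃ N : ℤ, ∀ n : ℤ, N ≤ n → ∀ l : ℤ, c n l w = 0) ∧
  (∀ (w : W) (n : ℤ), ∃ M : ℤ, ∀ l < M, c n l w = 0) ∧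
  ∀ p : MvPolynomial (Fin 2) ℂ, p ≠ 0 → Compat p a b →
    ∀ (w : W) (k l : ℤ),
      polyMul (substPoly p) (fun n l => c n l w) k l
        = substX1 (polyMul p (fun m n => a m (b n w))) k l

end Eo

/-- A vertex algebra over ℂ, with vertex operator map `Y(v,x) = Σ_n (Y v n) x^{-n-1}`,
vacuum `one`, truncation, vacuum and creation properties, and the Jacobi identity in
component form. -/
structure VertexAlg (V : Type) [AddCommGroup V] [Module ℂ V] where
  Y : V →ₗ[ℂ] (ℤ → Module.End ℂ V)
  one : V
  trunc : ∀ u v : V, ∃ N : ℤ, ∀ n : ℤ, N ≤ n → Y u n v = 0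
  vacuum : ∀ n : ℤ, Y one n = if n = -1 then 1 else 0
  creation_neg : ∀ v : V, Y v (-1) one = v
  creation : ∀ v : V, ∀ n : ℤ, 0 ≤ n → Y v n one = 0
  jacobi : ∀ u v w : V, ∀ m n k : ℤ,
    (∑ᶠ i : ℕ, ((-1:ℂ)^i * zchoose k i) • Y u (m + k - i) (Y v (n + i) w))
      - (-1:ℂ)^k • (∑ᶠ i : ℕ, ((-1:ℂ)^i * zchoose k i) • Y v (n + k - i) (Y u (m + i) w))
    = ∑ᶠ i : ℕ, zchoose m i • Y (Y u (k + i) v) (m + n - i) w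

/-- A quasi module at infinity for a vertex algebra `VA` on `V`:  a linear map
`Y_W : V → ℰᵒ(W)` with `Y_W(𝟏,x) = 1_W`, such that for any `u,v` there is a nonzero
polynomial `p(x₁,x₂)` with `p(x₁,x₂)Y_W(u,x₁)Y_W(v,x₂) ∈ Hom(W,W((x₁⁻¹,x₂⁻¹)))` and
`(p(x₁,x₂)Y_W(u,x₁)Y_W(v,x₂))|_{x₁=x₂+x₀} = p(x₀+x₂,x₂)Y_W(Y(u,x₀)v,x₂)`. -/
structure QModInf {V : Type} [AddCommGroup V] [Module ℂ V] (VA : VertexAlg V)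
    (W : Type) [AddCommGroup W] [Module ℂ W] where
  Y : V →ₗ[ℂ] (ℤ → Module.End ℂ W)
  trunc : ∀ (v : V) (w : W), ∃ N : ℤ, ∀ n < N, Y v n w = 0
  vacuum : ∀ n : ℤ, Y VA.one n = if n = -1 then 1 else 0
  weak_assoc : ∀ u v : V, ∃ p : MvPolynomial (Fin 2) ℂ, p ≠ 0 ∧
    Compat p (Y u) (Y v) ∧ AssocEq p (Y u) (Y v) (fun k l => Y (VA.Y u k v) l)

section Delta

variable {W : Type} [AddCommGroup W] [Module ℂ W]

/-- The coefficient of `x₁^{a} x₂^{b}` in `(1/j!) (∂/∂x₂)^j x₁⁻¹ δ(g(x₂)/x₁)` for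
`g(x) = αx+β`, where `g(x₂)^n` is expanded in `ℂ((x₂⁻¹))`. -/
def deltaDCoeff (α β : ℂ) (j : ℕ) (a b : ℤ) : ℂ :=
  if 0 ≤ -a - 1 - j - b then
    zchoose (-a-1) (-a-1-j-b).toNat * α ^ (b + j) * β ^ (-a-1-j-b).toNat
      * zchoose (b + j) j
  else 0

/-- The coefficient of `x₁^{-m-1} x₂^{-n-1}` in
`A(x₂) ⬝ (1/j!) (∂/∂x₂)^j x₁⁻¹ δ(g(x₂)/x₁)` (with `g(x) = αx+β`), applied to `w`. -/
def mulDeltaD (A : ℤ → Module.End ℂ W) (α β : ℂ) (j : ℕ) (m n : ℤ) (w : W) : W :=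
  ∑ᶠ l : ℤ, deltaDCoeff α β j (-m-1) (l - n) • A l w

/-- The coefficient of `x^{-l-1}` in `(αx+β)^{-n-1}`, expanded in `ℂ((x⁻¹))`; so for
`a(x) ∈ ℰᵒ(W)` and `g(x) = αx+β ∈ G`, the coefficient of `x^{-l-1}` in `a(g(x))` is
`Σ_n gcoeff α β l n • aₙ`. -/
def gcoeff (α β : ℂ) (l n : ℤ) : ℂ :=
  if 0 ≤ l - n then zchoose (-n-1) (l-n).toNat * α ^ (-l-1) * β ^ (l-n).toNat else 0

end Delta

/-- A group homomorphism `Ψ : Γ → G`, where `G` is the group (under composition) of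
linear polynomials `g(x) = αx + β` with `α ∈ ℂˣ, β ∈ ℂ`; encoded by
`Ψ(g)(x) = (A g) x + B g`. -/
structure HomToG (Γ : Type) [Group Γ] where
  A : Γ →* ℂˣ
  B : Γ → ℂ
  B_one : B 1 = 0
  B_mul : ∀ g h : Γ, B (g * h) = (A g : ℂ) * B h + B g

namespace HomToG

variable {Γ : Type} [Group Γ]

/-- The leading coefficient of `Ψ(g)⁻¹(x) = α⁻¹ x - α⁻¹ β`. -/
def invA (Ψ : HomToG Γ) (g : Γ) : ℂ := (Ψ.A g : ℂ)⁻¹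

/-- The constant coefficient of `Ψ(g)⁻¹(x) = α⁻¹ x - α⁻¹ β`. -/
def invB (Ψ : HomToG Γ) (g : Γ) : ℂ := -((Ψ.A g : ℂ)⁻¹) * Ψ.B g

end HomToG

/-- The polynomial `∏_{σ ∈ s} (x₁ - Ψ(σ)(x₂))`, a product of linear factors
`x₁ - g(x₂)` with `g ∈ Ψ(Γ)` (with multiplicities). -/
def gpoly {Γ : Type} [Group Γ] (Ψ : HomToG Γ) (s : Multiset Γ) :
    MvPolynomial (Fin 2) ℂ :=
  (s.map fun σ => X 0 - (C ((Ψ.A σ : ℂ)) * X 1 + C (Ψ.B σ))).prod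

/-- A vertex `Γ`-algebra: a vertex algebra `V` equipped with group homomorphisms
`L : Γ → GL(V)` and `φ : Γ → ℂˣ` such that `L(g)𝟏 = 𝟏` and
`L(g)Y(u,x)v = Y(L(g)u, φ(g)x) L(g)v`. -/
structure VertexGammaAlg (Γ : Type) [Group Γ] (V : Type) [AddCommGroup V]
    [Module ℂ V] extends VertexAlg V where
  L : Γ →* (V ≃ₗ[ℂ] V)
  phi : Γ →* ℂˣ
  L_vac : ∀ g : Γ, L g one = one
  L_Y : ∀ (g : Γ) (u v : V) (n : ℤ),
    L g (Y u n v) = ((phi g : ℂ) ^ (-n-1 : ℤ)) • Y (L g u) n (L g v)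

/-- A quasi module at infinity for a vertex `Γ`-algebra `GV`: a quasi module at
infinity for the underlying vertex algebra, together with a group homomorphism
`Ψ : Γ → G` with `Φ ∘ Ψ = φ`, satisfying the covariance
`Y_W(L(g)v, x) = Y_W(v, Ψ(g)⁻¹(x))` and `Ψ(Γ)`-locality. -/
structure GQModInf (Γ : Type) [Group Γ] {V : Type} [AddCommGroup V] [Module ℂ V]
    (GV : VertexGammaAlg Γ V) (W : Type) [AddCommGroup W] [Module ℂ W]
    extends QModInf GV.toVertexAlg W where
  Psi : HomToG Γ
  phi_eq : Psi.A = GV.phi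
  covariance : ∀ (g : Γ) (v : V) (l : ℤ) (w : W),
    Y (GV.L g v) l w = ∑ᶠ n : ℤ, gcoeff (Psi.invA g) (Psi.invB g) l n • Y v n w
  gammaLocal : ∀ u v : V, ∃ s : Multiset Γ, ∀ m n : ℤ,
    polyMul (gpoly Psi s) (fun m n => Y u m * Y v n - Y v n * Y u m) m n = 0

section LieInf

/-- The coefficient of `t^i` in `(αt+β)^m`, expanded in `ℂ((t⁻¹))`. -/
def gco (α β : ℂ) (m i : ℤ) : ℂ :=
  if 0 ≤ m - i then zchoose m (m-i).toNat * α ^ i * β ^ (m-i).toNat else 0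

/-- `p = Σ pₙ tⁿ` lies in `ℂ((t⁻¹))`: upper truncated in `t`. -/
def KTrunc (p : ℤ → ℂ) : Prop := ∃ N : ℤ, ∀ n : ℤ, N < n → p n = 0

/-- The coefficients of `p(αt+β)` for `p = Σ pₘ tᵐ ∈ ℂ((t⁻¹))`. -/
def substK (α β : ℂ) (p : ℤ → ℂ) : ℤ → ℂ := fun i => ∑ᶠ m : ℤ, gco α β m i * p m

variable {𝔤 : Type} [LieRing 𝔤] [LieAlgebra ℂ 𝔤]

/-- The element `a ⊗ p(t)` of `ĝ(∞) = (𝔤 ⊗ ℂ((t⁻¹))) ⊕ ℂk`, realized inside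
`(ℤ → 𝔤) × ℂ` via coefficient functions: the `t^n`-coefficient is `p n • a`. -/
def elemT (a : 𝔤) (p : ℤ → ℂ) : (ℤ → 𝔤) × ℂ := (fun n => p n • a, 0)

/-- The central element `k`. -/
def kvec {𝔤 : Type} [LieRing 𝔤] [LieAlgebra ℂ 𝔤] : (ℤ → 𝔤) × ℂ := (0, 1)

/-- The coefficient function of `tⁿ ∈ ℂ((t⁻¹))`. -/
def tpow (n : ℤ) : ℤ → ℂ := fun m => if m = n then 1 else 0

/-- `ĝ(∞) = (𝔤 ⊗ ℂ((t⁻¹))) ⊕ ℂ k`, realized as the span of the elements `a ⊗ p(t)`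
(`p` truncated) and `k` inside `(ℤ → 𝔤) × ℂ`. -/
def Ehat (𝔤 : Type) [LieRing 𝔤] [LieAlgebra ℂ 𝔤] : Submodule ℂ ((ℤ → 𝔤) × ℂ) :=
  Submodule.span ℂ ({x | ∃ (a : 𝔤) (p : ℤ → ℂ), KTrunc p ∧ x = elemT a p} ∪ {kvec})

lemma elemT_mem (a : 𝔤) (p : ℤ → ℂ) (hp : KTrunc p) : elemT a p ∈ Ehat 𝔤 :=
  Submodule.subset_span (Or.inl ⟨a, p, hp, rfl⟩)

lemma kvec_mem : (kvec : (ℤ → 𝔤) × ℂ) ∈ Ehat 𝔤 :=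
  Submodule.subset_span (Or.inr rfl)

lemma tpow_trunc (n : ℤ) : KTrunc (tpow n) := ⟨n, fun m hm => if_neg (by omega)⟩

variable {Γ : Type} [Group Γ]

/-- The twisted bracket `[·,·]_Γ` on `ĝ(∞)`, given on generators by
`[a⊗p(t), b⊗q(t)]_Γ = Σ_{g∈Γ} [ga,b] ⊗ p(g⁻¹(t))q(t)
   + Res_t q(t) (d/dt)p(g⁻¹(t)) ⟨ga,b⟩ k`, and `k` central. -/
def brG (ρ : Γ →* (𝔤 ≃ₗ[ℂ] 𝔤)) (Ψ : HomToG Γ) (Bf : 𝔤 →ₗ[ℂ] 𝔤 →ₗ[ℂ] ℂ)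
    (x y : (ℤ → 𝔤) × ℂ) : (ℤ → 𝔤) × ℂ :=
  (fun n => ∑ᶠ q : Γ × ℤ × ℤ,
      gco (Ψ.invA q.1) (Ψ.invB q.1) q.2.1 (n - q.2.2) • ⁅ρ q.1 (x.1 q.2.1), y.1 q.2.2⁆,
   ∑ᶠ q : Γ × ℤ × ℤ,
      (-(q.2.2 : ℂ)) * gco (Ψ.invA q.1) (Ψ.invB q.1) q.2.1 (-q.2.2)
        * Bf (ρ q.1 (x.1 q.2.1)) (y.1 q.2.2))

/-- The subspace of `ĝ(∞)` linearly spanned by the elements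
`g a ⊗ p(t) - a ⊗ p(g(t))` for `g ∈ Γ`, `a ∈ 𝔤`, `p(t) ∈ ℂ((t⁻¹))`. -/
def Sgen (ρ : Γ →* (𝔤 ≃ₗ[ℂ] 𝔤)) (Ψ : HomToG Γ) : Submodule ℂ ((ℤ → 𝔤) × ℂ) :=
  Submodule.span ℂ {x | ∃ (g : Γ) (a : 𝔤) (p : ℤ → ℂ), KTrunc p ∧
    x = elemT (ρ g a) p - elemT a (substK ((Ψ.A g : ℂ)) (Ψ.B g) p)}

/-- The untwisted bracket of the affine-type Lie algebra `ĝ(∞)`: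
`[a⊗p(t), b⊗q(t)] = [a,b] ⊗ p(t)q(t) + Res_t p'(t)q(t) ⟨a,b⟩ k`, `k` central. -/
def br0 (Bf : 𝔤 →ₗ[ℂ] 𝔤 →ₗ[ℂ] ℂ) (x y : (ℤ → 𝔤) × ℂ) : (ℤ → 𝔤) × ℂ :=
  (fun n => ∑ᶠ i : ℤ, ⁅x.1 i, y.1 (n - i)⁆,
   ∑ᶠ i : ℤ, (i : ℂ) * Bf (x.1 i) (y.1 (-i)))

/-- The action of `g ∈ Γ` on `ĝ(∞)`: `g ⬝ (a ⊗ p(t) + λk) = ga ⊗ p(g⁻¹(t)) + λk`. -/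
def actG (ρ : Γ →* (𝔤 ≃ₗ[ℂ] 𝔤)) (Ψ : HomToG Γ) (g : Γ) (x : (ℤ → 𝔤) × ℂ) :
    (ℤ → 𝔤) × ℂ :=
  (fun n => ∑ᶠ m : ℤ, gco (Ψ.invA g) (Ψ.invB g) m n • (ρ g (x.1 m)), x.2)

end LieInf

section AuxChoose

lemma descPochhammer_smeval_complex (x : ℂ) (k : ℕ) :
    (descPochhammer ℤ k).smeval x = ∏ j ∈ Finset.range k, (x - j) := by
  induction k with
  | zero => simp [descPochhammer_zero, Polynomial.smeval_one]
  | succ k ih =>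
    rw [descPochhammer_succ_right, Polynomial.smeval_mul, ih, Finset.prod_range_succ]
    congr 1
    simp [Polynomial.smeval_sub, Polynomial.smeval_natCast]

lemma prod_range_div_factorial (x : ℂ) (k : ℕ) :
    (∏ j ∈ Finset.range k, (x - j)) / (k.factorial : ℂ) = Ring.choose x k := by
  rw [← descPochhammer_smeval_complex, Ring.descPochhammer_eq_factorial_smul_choose,
    nsmul_eq_mul]
  rw [mul_comm, mul_div_assoc, div_self (by exact_mod_cast k.factorial_ne_zero), mul_one]

lemma zchoose_eq_choose (n : ℤ) (k : ℕ) : zchoose n k = Ring.choose ((n:ℂ)) k :=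
  prod_range_div_factorial _ _

lemma choose_prod (x : ℂ) (k : ℕ) :
    Ring.choose x k = (∏ j ∈ Finset.range k, (x - j)) / (k.factorial : ℂ) :=
  (prod_range_div_factorial x k).symm

lemma cchoose_vander (x y : ℂ) (K : ℕ) :
    ∑ j ∈ Finset.range (K+1), Ring.choose x j * Ring.choose y (K - j)
      = Ring.choose (x+y) K := by
  rw [Ring.add_choose_eq K (Commute.all x y), Finset.Nat.sum_antidiagonal_eq_sum_range_succ_mk]

lemma cchoose_trinomial (x : ℂ) {K j : ℕ} (h : j ≤ K) :
    Ring.choose x (K - j) * Ring.choose (x - K + j) j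
      = Ring.choose x K * (K.choose j : ℂ) := by
  have h2 := Ring.choose_smul_choose x (n := K) (k := K - j) (Nat.sub_le K j)
  rw [Nat.choose_symm h, Nat.sub_sub_self h] at h2
  have hc : x - ((K - j : ℕ) : ℂ) = x - K + j := by
    push_cast [Nat.cast_sub h]; ring
  rw [hc] at h2
  rw [← h2, nsmul_eq_mul, mul_comm]

lemma cchoose_absorb (x : ℂ) (k : ℕ) :
    (x - k) * Ring.choose x k = x * Ring.choose (x - 1) k := by
  rw [choose_prod, choose_prod]
  have h1 : (x - k) * ∏ j ∈ Finset.range k, (x - j) = ∏ j ∈ Finset.range (k+1), (x - j) := by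
    rw [Finset.prod_range_succ]; ring
  have h2 : x * ∏ j ∈ Finset.range k, (x - 1 - j) = ∏ j ∈ Finset.range (k+1), (x - j) := by
    have h := Finset.prod_range_succ' (fun j : ℕ => x - (j:ℂ)) k
    rw [h]
    simp only [Nat.cast_zero, sub_zero]
    rw [mul_comm]
    congr 1
    refine Finset.prod_congr rfl fun j _ => ?_
    push_cast; ring
  rw [mul_div_assoc', mul_div_assoc', h1, h2]

lemma gco_of_le {α β : ℂ} {m i : ℤ} (h : i ≤ m) :
    gco α β m i = Ring.choose (m:ℂ) (m - i).toNat * α ^ i * β ^ (m - i).toNat := by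
  rw [gco, if_pos (by omega), zchoose_eq_choose]

lemma gco_of_lt {α β : ℂ} {m i : ℤ} (h : m < i) : gco α β m i = 0 := if_neg (by omega)

lemma gco_conv {α : ℂ} (hα : α ≠ 0) (β : ℂ) (m m' n : ℤ) :
    ∑ᶠ i : ℤ, gco α β m i * gco α β m' (n - i) = gco α β (m + m') n := by
  by_cases hn : n ≤ m + m'
  · set K : ℕ := (m + m' - n).toNat with hK
    have hsupp : (Function.support fun i => gco α β m i * gco α β m' (n - i)) ⊆
        ↑((Finset.range (K+1)).image (fun j : ℕ => m - (j:ℤ))) := by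
      intro i hi
      simp only [Function.mem_support] at hi
      have h1 : i ≤ m := by
        by_contra h
        exact hi (by rw [gco_of_lt (show m < i by omega)]; ring)
      have h2 : n - i ≤ m' := by
        by_contra h
        exact hi (by rw [gco_of_lt (α := α) (β := β) (show m' < n - i by omega)]; ring)
      simp only [Finset.coe_image, Set.mem_image, Finset.mem_coe, Finset.mem_range]
      exact ⟨(m - i).toNat, by omega, by omega⟩
    rw [finsum_eq_sum_of_support_subset _ hsupp,
      Finset.sum_image (fun a _ b _ h => by omega)]
    have hterm : ∀ j ∈ Finset.range (K+1),
        gco α β m (m - (j:ℤ)) * gco α β m' (n - (m - (j:ℤ)))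
          = (Ring.choose (m:ℂ) j * Ring.choose ((m':ℤ):ℂ) (K - j)) * (α ^ n * β ^ K) := by
      intro j hj
      rw [Finset.mem_range] at hj
      rw [gco_of_le (by omega), gco_of_le (by omega)]
      have e1 : (m - (m - (j:ℤ))).toNat = j := by omega
      have e2 : (m' - (n - (m - (j:ℤ)))).toNat = K - j := by omega
      rw [e1, e2]
      have e3 : α ^ (m - (j:ℤ)) * α ^ (n - (m - (j:ℤ))) = α ^ n := by
        rw [← zpow_add₀ hα]; ring_nf
      have e4 : β ^ j * β ^ (K - j) = β ^ K := by
        rw [← pow_add]; congr 1; omega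
      calc (Ring.choose (m:ℂ) j * α ^ (m - (j:ℤ)) * β ^ j)
            * (Ring.choose ((m':ℤ):ℂ) (K-j) * α ^ (n - (m - (j:ℤ))) * β ^ (K-j))
          = (Ring.choose (m:ℂ) j * Ring.choose ((m':ℤ):ℂ) (K - j))
            * ((α ^ (m - (j:ℤ)) * α ^ (n - (m - (j:ℤ)))) * (β ^ j * β ^ (K-j))) := by ring
        _ = _ := by rw [e3, e4]
    rw [Finset.sum_congr rfl hterm, ← Finset.sum_mul, cchoose_vander, gco_of_le (by omega)]
    have hcast : ((m:ℂ) + (m':ℂ)) = (((m + m') : ℤ) : ℂ) := by push_cast; ring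
    have e5 : (m + m' - n).toNat = K := rfl
    rw [hcast, e5]
    ring
  · rw [gco_of_lt (show m + m' < n by omega)]
    apply finsum_eq_zero_of_forall_eq_zero
    intro i
    rcases le_or_gt i m with h | h
    · rw [gco_of_lt (α := α) (β := β) (show m' < n - i by omega)]; ring
    · rw [gco_of_lt h]; ring

end AuxChoose

section AuxChoose2

lemma gco_comp {α α' : ℂ} (hα : α ≠ 0) (hα' : α' ≠ 0) (β β' : ℂ) (m n : ℤ) :
    ∑ᶠ i : ℤ, gco α β m i * gco α' β' i n = gco (α * α') (α * β' + β) m n := by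
  by_cases hn : n ≤ m
  · set K : ℕ := (m - n).toNat with hK
    have hsupp : (Function.support fun i => gco α β m i * gco α' β' i n) ⊆
        ↑((Finset.range (K+1)).image (fun j : ℕ => n + (j:ℤ))) := by
      intro i hi
      simp only [Function.mem_support] at hi
      have h1 : i ≤ m := by
        by_contra h
        exact hi (by rw [gco_of_lt (show m < i by omega)]; ring)
      have h2 : n ≤ i := by
        by_contra h
        exact hi (by rw [gco_of_lt (α := α') (β := β') (show i < n by omega)]; ring)
      simp only [Finset.coe_image, Set.mem_image, Finset.mem_coe, Finset.mem_range]
      exact ⟨(i - n).toNat, by omega, by omega⟩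
    rw [finsum_eq_sum_of_support_subset _ hsupp,
      Finset.sum_image (fun a _ b _ h => by omega)]
    have hterm : ∀ j ∈ Finset.range (K+1),
        gco α β m (n + (j:ℤ)) * gco α' β' (n + (j:ℤ)) n
          = (Ring.choose (m:ℂ) K * α ^ n * α' ^ n)
              * ((α * β') ^ j * β ^ (K - j) * (K.choose j : ℂ)) := by
      intro j hj
      rw [Finset.mem_range] at hj
      rw [gco_of_le (by omega), gco_of_le (by omega)]
      have e1 : (m - (n + (j:ℤ))).toNat = K - j := by omega
      have e2 : ((n + (j:ℤ)) - n).toNat = j := by omega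
      rw [e1, e2]
      have e3 : ((n + (j:ℤ) : ℤ) : ℂ) = (m:ℂ) - K + j := by
        have : (n : ℤ) = m - K := by omega
        rw [this]; push_cast; ring
      have e4 : α ^ (n + (j:ℤ)) = α ^ n * α ^ j := by
        rw [zpow_add₀ hα, zpow_natCast]
      have htr := cchoose_trinomial (m:ℂ) (Nat.lt_succ_iff.mp hj)
      calc (Ring.choose (m:ℂ) (K-j) * α ^ (n + (j:ℤ)) * β ^ (K-j))
            * (Ring.choose ((n + (j:ℤ) : ℤ) : ℂ) j * α' ^ n * β' ^ j)
          = (Ring.choose (m:ℂ) (K-j) * Ring.choose ((m:ℂ) - K + j) j)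
              * (α ^ (n + (j:ℤ)) * β ^ (K-j) * α' ^ n * β' ^ j) := by
            rw [e3]; ring
        _ = (Ring.choose (m:ℂ) K * (K.choose j : ℂ))
              * ((α ^ n * α ^ j) * β ^ (K-j) * α' ^ n * β' ^ j) := by
            rw [htr, e4]
        _ = _ := by rw [mul_pow]; ring
    rw [Finset.sum_congr rfl hterm, ← Finset.mul_sum, ← add_pow, gco_of_le (by omega)]
    have e5 : (m - n).toNat = K := rfl
    rw [e5, mul_zpow]
    ring
  · rw [gco_of_lt (show m < n by omega)]
    apply finsum_eq_zero_of_forall_eq_zero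
    intro i
    rcases le_or_gt i m with h | h
    · rw [gco_of_lt (α := α') (β := β') (show i < n by omega)]; ring
    · rw [gco_of_lt h]; ring

lemma gco_deriv {α : ℂ} (hα : α ≠ 0) (β : ℂ) (m i : ℤ) :
    (i:ℂ) * gco α β m i = (m:ℂ) * α * gco α β (m-1) (i-1) := by
  rcases le_or_gt i m with h | h
  · rw [gco_of_le h, gco_of_le (show i - 1 ≤ m - 1 by omega)]
    have e : (m - 1 - (i - 1)).toNat = (m - i).toNat := by omega
    rw [e]
    set k := (m - i).toNat with hk
    have hx : (i:ℂ) = (m:ℂ) - k := by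
      have : i = m - (k:ℤ) := by omega
      rw [this]; push_cast; ring
    have habs := cchoose_absorb (m:ℂ) k
    have hα2 : α * α ^ (i-1) = α ^ i := by
      have e2 : i - 1 + 1 = i := by ring
      rw [mul_comm, ← zpow_add_one₀ hα, e2]
    have hcast : ((m - 1 : ℤ) : ℂ) = (m:ℂ) - 1 := by push_cast; ring
    rw [hcast]
    calc (i:ℂ) * (Ring.choose (m:ℂ) k * α ^ i * β ^ k)
        = (((m:ℂ) - k) * Ring.choose (m:ℂ) k) * (α ^ i * β ^ k) := by rw [hx]; ring
      _ = ((m:ℂ) * Ring.choose ((m:ℂ) - 1) k) * ((α * α ^ (i-1)) * β ^ k) := by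
          rw [habs, hα2]
      _ = _ := by ring
  · rw [gco_of_lt h, gco_of_lt (show m - 1 < i - 1 by omega)]; ring

lemma gco_neg_one {α : ℂ} (hα : α ≠ 0) (β : ℂ) (M : ℤ) :
    gco α β M (-1) = if M = -1 then α⁻¹ else 0 := by
  rcases lt_trichotomy M (-1) with h | h | h
  · rw [gco_of_lt h, if_neg (by omega)]
  · subst h
    rw [gco, if_pos (by omega), if_pos rfl]
    norm_num [zchoose]
  · rw [gco_of_le (by omega), if_neg (by omega)]
    have h0 : 0 ≤ M := by omega
    have hz : Ring.choose ((M:ℤ):ℂ) (M - (-1)).toNat = 0 := by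
      rw [choose_prod]
      have hmem : M.toNat ∈ Finset.range (M - (-1)).toNat := by
        simp only [Finset.mem_range]; omega
      have hcast : ((M.toNat : ℕ) : ℂ) = ((M : ℤ) : ℂ) := by
        exact_mod_cast congrArg (fun z : ℤ => (z : ℂ)) (Int.toNat_of_nonneg h0)
      rw [Finset.prod_eq_zero hmem (by rw [hcast]; ring)]
      simp
    rw [hz]; ring

lemma gco_res {α : ℂ} (hα : α ≠ 0) (β : ℂ) (m m' : ℤ) :
    ∑ᶠ i : ℤ, (i:ℂ) * (gco α β m i * gco α β m' (-i)) = if m + m' = 0 then (m:ℂ) else 0 := by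
  have h1 : ∀ i : ℤ, (i:ℂ) * (gco α β m i * gco α β m' (-i))
      = ((m:ℂ) * α) • (gco α β (m-1) (i-1) * gco α β m' (-1 - (i-1))) := by
    intro i
    have hd := gco_deriv hα β m i
    have harg : (-1 : ℤ) - (i - 1) = -i := by ring
    rw [harg, smul_eq_mul]
    calc (i:ℂ) * (gco α β m i * gco α β m' (-i))
        = ((i:ℂ) * gco α β m i) * gco α β m' (-i) := by ring
      _ = ((m:ℂ) * α * gco α β (m-1) (i-1)) * gco α β m' (-i) := by rw [hd]
      _ = _ := by ring
  rw [finsum_congr h1, ← smul_finsum]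
  have h2 : (∑ᶠ i : ℤ, gco α β (m-1) (i-1) * gco α β m' (-1 - (i-1)))
      = ∑ᶠ j : ℤ, gco α β (m-1) j * gco α β m' (-1 - j) := by
    exact finsum_comp_equiv (Equiv.subRight (1:ℤ)) (f := fun j => gco α β (m-1) j * gco α β m' (-1 - j))
  rw [h2, gco_conv hα β (m-1) m' (-1), gco_neg_one hα, smul_eq_mul]
  by_cases hmm : m + m' = 0
  · rw [if_pos (by omega), if_pos hmm]
    field_simp
  · rw [if_neg (by omega), if_neg hmm, mul_zero]

end AuxChoose2

section AuxSeq

def convC (p q : ℤ → ℂ) : ℤ → ℂ := fun n => ∑ᶠ i : ℤ, p i * q (n - i)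
def resC (p q : ℤ → ℂ) : ℂ := ∑ᶠ i : ℤ, (i : ℂ) * (p i * q (-i))

lemma gco_ne_zero_le {α β : ℂ} {m i : ℤ} (h : gco α β m i ≠ 0) : i ≤ m := by
  by_contra hc; exact h (gco_of_lt (by omega))

lemma gco_one_zero (m n : ℤ) : gco 1 0 m n = if m = n then 1 else 0 := by
  rcases lt_trichotomy m n with h | h | h
  · rw [gco_of_lt h, if_neg (by omega)]
  · subst h
    rw [gco_of_le le_rfl, if_pos rfl]
    simp [Ring.choose_zero_right]
  · rw [gco_of_le (by omega), if_neg (by omega),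
      zero_pow (show (m-n).toNat ≠ 0 by omega)]
    ring

lemma substK_eq_zero_of_gt {p : ℤ → ℂ} {N : ℤ} (hp : ∀ n, N < n → p n = 0) (α β : ℂ)
    {i : ℤ} (hi : N < i) : substK α β p i = 0 := by
  apply finsum_eq_zero_of_forall_eq_zero
  intro m
  rcases le_or_gt i m with h | h
  · rw [hp m (by omega), mul_zero]
  · rw [gco_of_lt h, zero_mul]

lemma substK_trunc {p : ℤ → ℂ} (hp : KTrunc p) (α β : ℂ) : KTrunc (substK α β p) := by
  obtain ⟨N, hN⟩ := hp
  exact ⟨N, fun i hi => substK_eq_zero_of_gt hN α β hi⟩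

lemma convC_eq_zero_of_gt {p q : ℤ → ℂ} {Np Nq : ℤ} (hp : ∀ n, Np < n → p n = 0)
    (hq : ∀ n, Nq < n → q n = 0) {n : ℤ} (hn : Np + Nq < n) : convC p q n = 0 := by
  apply finsum_eq_zero_of_forall_eq_zero
  intro i
  rcases le_or_gt i Np with h | h
  · rw [hq _ (by omega), mul_zero]
  · rw [hp _ (by omega), zero_mul]

lemma convC_trunc {p q : ℤ → ℂ} (hp : KTrunc p) (hq : KTrunc q) : KTrunc (convC p q) := by
  obtain ⟨Np, hNp⟩ := hp; obtain ⟨Nq, hNq⟩ := hq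
  exact ⟨Np + Nq, fun n hn => convC_eq_zero_of_gt hNp hNq hn⟩

lemma substK_substK {α α' : ℂ} (hα : α ≠ 0) (hα' : α' ≠ 0) (β β' : ℂ) {p : ℤ → ℂ}
    (hp : KTrunc p) : substK α' β' (substK α β p) = substK (α * α') (α * β' + β) p := by
  obtain ⟨N, hN⟩ := hp
  funext n
  have hq : ∀ i, N < i → substK α β p i = 0 := fun i hi => substK_eq_zero_of_gt hN α β hi
  by_cases hnN : n ≤ N
  · set S := Finset.Icc n N with hS
    have lhs1 : substK α' β' (substK α β p) n
        = ∑ i ∈ S, gco α' β' i n * substK α β p i := by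
      apply finsum_eq_sum_of_support_subset
      intro i hi
      simp only [Function.mem_support] at hi
      have h1 : n ≤ i := gco_ne_zero_le (left_ne_zero_of_mul hi)
      have h2 : i ≤ N := by
        by_contra h; exact (right_ne_zero_of_mul hi) (hq i (by omega))
      simp only [hS, Finset.coe_Icc, Set.mem_Icc]; omega
    have lhs2 : ∀ i ∈ S, gco α' β' i n * substK α β p i
        = ∑ m ∈ S, gco α' β' i n * (gco α β m i * p m) := by
      intro i hi
      rw [Finset.mem_Icc] at hi
      have : substK α β p i = ∑ m ∈ S, gco α β m i * p m := by
        apply finsum_eq_sum_of_support_subset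
        intro m hm
        simp only [Function.mem_support] at hm
        have h1 : i ≤ m := gco_ne_zero_le (left_ne_zero_of_mul hm)
        have h2 : m ≤ N := by
          by_contra h; exact (right_ne_zero_of_mul hm) (hN m (by omega))
        simp only [hS, Finset.coe_Icc, Set.mem_Icc]; omega
      rw [this, Finset.mul_sum]
    have hinner : ∀ m ∈ S, ∑ i ∈ S, gco α' β' i n * (gco α β m i * p m)
        = gco (α * α') (α * β' + β) m n * p m := by
      intro m hm
      rw [Finset.mem_Icc] at hm
      have e1 : ∑ i ∈ S, gco α' β' i n * (gco α β m i * p m)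
          = (∑ i ∈ S, gco α β m i * gco α' β' i n) * p m := by
        rw [Finset.sum_mul]
        exact Finset.sum_congr rfl fun i _ => by ring
      have e2 : ∑ i ∈ S, gco α β m i * gco α' β' i n
          = ∑ᶠ i : ℤ, gco α β m i * gco α' β' i n := by
        symm
        apply finsum_eq_sum_of_support_subset
        intro i hi
        simp only [Function.mem_support] at hi
        have h1 : i ≤ m := gco_ne_zero_le (left_ne_zero_of_mul hi)
        have h2 : n ≤ i := gco_ne_zero_le (right_ne_zero_of_mul hi)
        simp only [hS, Finset.coe_Icc, Set.mem_Icc]; omega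
      rw [e1, e2, gco_comp hα hα']
    calc substK α' β' (substK α β p) n
        = ∑ i ∈ S, ∑ m ∈ S, gco α' β' i n * (gco α β m i * p m) := by
          rw [lhs1]; exact Finset.sum_congr rfl lhs2
      _ = ∑ m ∈ S, ∑ i ∈ S, gco α' β' i n * (gco α β m i * p m) := Finset.sum_comm
      _ = ∑ m ∈ S, gco (α * α') (α * β' + β) m n * p m := Finset.sum_congr rfl hinner
      _ = substK (α * α') (α * β' + β) p n := by
          symm
          apply finsum_eq_sum_of_support_subset
          intro m hm
          simp only [Function.mem_support] at hm
          have h1 : n ≤ m := gco_ne_zero_le (left_ne_zero_of_mul hm)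
          have h2 : m ≤ N := by
            by_contra h; exact (right_ne_zero_of_mul hm) (hN m (by omega))
          simp only [hS, Finset.coe_Icc, Set.mem_Icc]; omega
  · rw [substK_eq_zero_of_gt hq α' β' (by omega),
      substK_eq_zero_of_gt hN (α * α') (α * β' + β) (by omega)]

end AuxSeq

section AuxSeq2

lemma convC_substK {α : ℂ} (hα : α ≠ 0) (β : ℂ) {p q : ℤ → ℂ} {Np Nq : ℤ}
    (hp : ∀ n, Np < n → p n = 0) (hq : ∀ n, Nq < n → q n = 0) :
    convC (substK α β p) (substK α β q) = substK α β (convC p q) := by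
  funext n
  set T1 := Finset.Icc (n - Nq) Np with hT1
  set T2 := Finset.Icc (n - Np) Nq with hT2
  set U := Finset.Icc n (Np + Nq) with hU
  have hP : ∀ i, Np < i → substK α β p i = 0 := fun i hi => substK_eq_zero_of_gt hp α β hi
  have hQ : ∀ i, Nq < i → substK α β q i = 0 := fun i hi => substK_eq_zero_of_gt hq α β hi
  have key : ∀ m ∈ T1, ∀ m' ∈ T2,
      (∑ i ∈ T1, gco α β m i * gco α β m' (n - i)) = gco α β (m + m') n := by
    intro m hm m' hm'
    rw [Finset.mem_Icc] at hm hm'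
    rw [← gco_conv hα β m m' n]
    symm
    apply finsum_eq_sum_of_support_subset
    intro i hi
    simp only [Function.mem_support] at hi
    have h1 : i ≤ m := gco_ne_zero_le (left_ne_zero_of_mul hi)
    have h2 : n - i ≤ m' := gco_ne_zero_le (right_ne_zero_of_mul hi)
    simp only [hT1, Finset.coe_Icc, Set.mem_Icc]; omega
  -- LHS to canonical double sum
  have lhs : convC (substK α β p) (substK α β q) n
      = ∑ m ∈ T1, ∑ m' ∈ T2, gco α β (m + m') n * (p m * q m') := by
    have l1 : convC (substK α β p) (substK α β q) n
        = ∑ i ∈ T1, substK α β p i * substK α β q (n - i) := by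
      apply finsum_eq_sum_of_support_subset
      intro i hi
      simp only [Function.mem_support] at hi
      have h1 : i ≤ Np := by
        by_contra h; exact (left_ne_zero_of_mul hi) (hP i (by omega))
      have h2 : n - i ≤ Nq := by
        by_contra h; exact (right_ne_zero_of_mul hi) (hQ _ (by omega))
      simp only [hT1, Finset.coe_Icc, Set.mem_Icc]; omega
    have l2 : ∀ i ∈ T1, substK α β p i * substK α β q (n - i)
        = ∑ m ∈ T1, ∑ m' ∈ T2, (gco α β m i * gco α β m' (n - i)) * (p m * q m') := by
      intro i hi
      rw [Finset.mem_Icc] at hi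
      have e1 : substK α β p i = ∑ m ∈ T1, gco α β m i * p m := by
        apply finsum_eq_sum_of_support_subset
        intro m hm
        simp only [Function.mem_support] at hm
        have h1 : i ≤ m := gco_ne_zero_le (left_ne_zero_of_mul hm)
        have h2 : m ≤ Np := by
          by_contra h; exact (right_ne_zero_of_mul hm) (hp m (by omega))
        simp only [hT1, Finset.coe_Icc, Set.mem_Icc]; omega
      have e2 : substK α β q (n - i) = ∑ m' ∈ T2, gco α β m' (n - i) * q m' := by
        apply finsum_eq_sum_of_support_subset
        intro m' hm'
        simp only [Function.mem_support] at hm'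
        have h1 : n - i ≤ m' := gco_ne_zero_le (left_ne_zero_of_mul hm')
        have h2 : m' ≤ Nq := by
          by_contra h; exact (right_ne_zero_of_mul hm') (hq m' (by omega))
        simp only [hT2, Finset.coe_Icc, Set.mem_Icc]; omega
      rw [e1, e2, Finset.sum_mul_sum]
      exact Finset.sum_congr rfl fun m _ => Finset.sum_congr rfl fun m' _ => by ring
    calc convC (substK α β p) (substK α β q) n
        = ∑ i ∈ T1, ∑ m ∈ T1, ∑ m' ∈ T2,
            (gco α β m i * gco α β m' (n - i)) * (p m * q m') := by
          rw [l1]; exact Finset.sum_congr rfl l2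
      _ = ∑ m ∈ T1, ∑ i ∈ T1, ∑ m' ∈ T2,
            (gco α β m i * gco α β m' (n - i)) * (p m * q m') := Finset.sum_comm
      _ = ∑ m ∈ T1, ∑ m' ∈ T2, ∑ i ∈ T1,
            (gco α β m i * gco α β m' (n - i)) * (p m * q m') :=
          Finset.sum_congr rfl fun m _ => Finset.sum_comm
      _ = ∑ m ∈ T1, ∑ m' ∈ T2, gco α β (m + m') n * (p m * q m') := by
          refine Finset.sum_congr rfl fun m hm => Finset.sum_congr rfl fun m' hm' => ?_
          rw [show ∑ i ∈ T1, (gco α β m i * gco α β m' (n - i)) * (p m * q m')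
              = (∑ i ∈ T1, gco α β m i * gco α β m' (n - i)) * (p m * q m') from
            (Finset.sum_mul _ _ _).symm, key m hm m' hm']
  -- RHS to canonical double sum
  have rhs : substK α β (convC p q) n
      = ∑ m ∈ T1, ∑ m' ∈ T2, gco α β (m + m') n * (p m * q m') := by
    have r1 : substK α β (convC p q) n = ∑ M ∈ U, gco α β M n * convC p q M := by
      apply finsum_eq_sum_of_support_subset
      intro M hM
      simp only [Function.mem_support] at hM
      have h1 : n ≤ M := gco_ne_zero_le (left_ne_zero_of_mul hM)
      have h2 : M ≤ Np + Nq := by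
        by_contra h
        exact (right_ne_zero_of_mul hM) (convC_eq_zero_of_gt hp hq (by omega))
      simp only [hU, Finset.coe_Icc, Set.mem_Icc]; omega
    have r2 : ∀ M ∈ U, gco α β M n * convC p q M
        = ∑ m ∈ T1, gco α β M n * (p m * q (M - m)) := by
      intro M hM
      rw [Finset.mem_Icc] at hM
      have e1 : convC p q M = ∑ m ∈ T1, p m * q (M - m) := by
        apply finsum_eq_sum_of_support_subset
        intro m hm
        simp only [Function.mem_support] at hm
        have h1 : m ≤ Np := by
          by_contra h; exact (left_ne_zero_of_mul hm) (hp m (by omega))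
        have h2 : M - m ≤ Nq := by
          by_contra h; exact (right_ne_zero_of_mul hm) (hq _ (by omega))
        simp only [hT1, Finset.coe_Icc, Set.mem_Icc]; omega
      rw [e1, Finset.mul_sum]
    have r3 : ∀ m ∈ T1, ∑ M ∈ U, gco α β M n * (p m * q (M - m))
        = ∑ m' ∈ T2, gco α β (m + m') n * (p m * q m') := by
      intro m hm
      rw [Finset.mem_Icc] at hm
      have e1 : ∑ M ∈ U, gco α β M n * (p m * q (M - m))
          = ∑ᶠ M : ℤ, gco α β M n * (p m * q (M - m)) := by
        symm
        apply finsum_eq_sum_of_support_subset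
        intro M hM
        simp only [Function.mem_support] at hM
        have h1 : n ≤ M := gco_ne_zero_le (left_ne_zero_of_mul hM)
        have h2 : M - m ≤ Nq := by
          by_contra h
          exact hM (by rw [hq _ (by omega), mul_zero, mul_zero])
        simp only [hU, Finset.coe_Icc, Set.mem_Icc]; omega
      have e2 : (∑ᶠ M : ℤ, gco α β M n * (p m * q (M - m)))
          = ∑ᶠ m' : ℤ, gco α β (m + m') n * (p m * q m') := by
        rw [← finsum_comp_equiv (Equiv.addLeft m)
          (f := fun M => gco α β M n * (p m * q (M - m)))]
        apply finsum_congr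
        intro m'
        simp only [Equiv.coe_addLeft]
        rw [show m + m' - m = m' by ring]
      have e3 : (∑ᶠ m' : ℤ, gco α β (m + m') n * (p m * q m'))
          = ∑ m' ∈ T2, gco α β (m + m') n * (p m * q m') := by
        apply finsum_eq_sum_of_support_subset
        intro m' hm'
        simp only [Function.mem_support] at hm'
        have h1 : n ≤ m + m' := gco_ne_zero_le (left_ne_zero_of_mul hm')
        have h2 : m' ≤ Nq := by
          by_contra h
          exact hm' (by rw [hq _ (by omega), mul_zero, mul_zero])
        simp only [hT2, Finset.coe_Icc, Set.mem_Icc]; omega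
      rw [e1, e2, e3]
    calc substK α β (convC p q) n
        = ∑ M ∈ U, ∑ m ∈ T1, gco α β M n * (p m * q (M - m)) := by
          rw [r1]; exact Finset.sum_congr rfl r2
      _ = ∑ m ∈ T1, ∑ M ∈ U, gco α β M n * (p m * q (M - m)) := Finset.sum_comm
      _ = ∑ m ∈ T1, ∑ m' ∈ T2, gco α β (m + m') n * (p m * q m') :=
          Finset.sum_congr rfl r3
  rw [lhs, rhs]

end AuxSeq2

section AuxSeq3

lemma resC_substK {α : ℂ} (hα : α ≠ 0) (β : ℂ) {p q : ℤ → ℂ} {Np Nq : ℤ}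
    (hp : ∀ n, Np < n → p n = 0) (hq : ∀ n, Nq < n → q n = 0) :
    resC (substK α β p) (substK α β q) = resC p q := by
  set T1 := Finset.Icc (-Nq) Np with hT1
  set T2 := Finset.Icc (-Np) Nq with hT2
  have hP : ∀ i, Np < i → substK α β p i = 0 := fun i hi => substK_eq_zero_of_gt hp α β hi
  have hQ : ∀ i, Nq < i → substK α β q i = 0 := fun i hi => substK_eq_zero_of_gt hq α β hi
  have key : ∀ m ∈ T1, ∀ m' ∈ T2,
      (∑ i ∈ T1, (i:ℂ) * (gco α β m i * gco α β m' (-i)))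
        = if m + m' = 0 then (m:ℂ) else 0 := by
    intro m hm m' hm'
    rw [Finset.mem_Icc] at hm hm'
    rw [← gco_res hα β m m']
    symm
    apply finsum_eq_sum_of_support_subset
    intro i hi
    simp only [Function.mem_support] at hi
    have h1 : i ≤ m := by
      by_contra h; exact hi (by rw [gco_of_lt (show m < i by omega), zero_mul, mul_zero])
    have h2 : -i ≤ m' := by
      by_contra h
      exact hi (by rw [gco_of_lt (α := α) (β := β) (show m' < -i by omega), mul_zero, mul_zero])
    simp only [hT1, Finset.coe_Icc, Set.mem_Icc]; omega
  have l1 : resC (substK α β p) (substK α β q)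
      = ∑ i ∈ T1, (i:ℂ) * (substK α β p i * substK α β q (-i)) := by
    apply finsum_eq_sum_of_support_subset
    intro i hi
    simp only [Function.mem_support] at hi
    have h1 : i ≤ Np := by
      by_contra h; exact hi (by rw [hP i (by omega), zero_mul, mul_zero])
    have h2 : -i ≤ Nq := by
      by_contra h; exact hi (by rw [hQ _ (by omega), mul_zero, mul_zero])
    simp only [hT1, Finset.coe_Icc, Set.mem_Icc]; omega
  have l2 : ∀ i ∈ T1, (i:ℂ) * (substK α β p i * substK α β q (-i))
      = ∑ m ∈ T1, ∑ m' ∈ T2, ((i:ℂ) * (gco α β m i * gco α β m' (-i))) * (p m * q m') := by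
    intro i hi
    rw [Finset.mem_Icc] at hi
    have e1 : substK α β p i = ∑ m ∈ T1, gco α β m i * p m := by
      apply finsum_eq_sum_of_support_subset
      intro m hm
      simp only [Function.mem_support] at hm
      have h1 : i ≤ m := gco_ne_zero_le (left_ne_zero_of_mul hm)
      have h2 : m ≤ Np := by
        by_contra h; exact (right_ne_zero_of_mul hm) (hp m (by omega))
      simp only [hT1, Finset.coe_Icc, Set.mem_Icc]; omega
    have e2 : substK α β q (-i) = ∑ m' ∈ T2, gco α β m' (-i) * q m' := by
      apply finsum_eq_sum_of_support_subset
      intro m' hm'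
      simp only [Function.mem_support] at hm'
      have h1 : -i ≤ m' := gco_ne_zero_le (left_ne_zero_of_mul hm')
      have h2 : m' ≤ Nq := by
        by_contra h; exact (right_ne_zero_of_mul hm') (hq m' (by omega))
      simp only [hT2, Finset.coe_Icc, Set.mem_Icc]; omega
    rw [e1, e2, Finset.sum_mul_sum, Finset.mul_sum]
    refine Finset.sum_congr rfl fun m _ => ?_
    rw [Finset.mul_sum]
    exact Finset.sum_congr rfl fun m' _ => by ring
  have l3 : ∀ m ∈ T1, ∀ m' ∈ T2,
      (∑ i ∈ T1, ((i:ℂ) * (gco α β m i * gco α β m' (-i))) * (p m * q m'))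
        = (if m + m' = 0 then (m:ℂ) else 0) * (p m * q m') := by
    intro m hm m' hm'
    rw [← Finset.sum_mul, key m hm m' hm']
  calc resC (substK α β p) (substK α β q)
      = ∑ i ∈ T1, ∑ m ∈ T1, ∑ m' ∈ T2,
          ((i:ℂ) * (gco α β m i * gco α β m' (-i))) * (p m * q m') := by
        rw [l1]; exact Finset.sum_congr rfl l2
    _ = ∑ m ∈ T1, ∑ i ∈ T1, ∑ m' ∈ T2,
          ((i:ℂ) * (gco α β m i * gco α β m' (-i))) * (p m * q m') := Finset.sum_comm
    _ = ∑ m ∈ T1, ∑ m' ∈ T2, ∑ i ∈ T1,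
          ((i:ℂ) * (gco α β m i * gco α β m' (-i))) * (p m * q m') :=
        Finset.sum_congr rfl fun m _ => Finset.sum_comm
    _ = ∑ m ∈ T1, ∑ m' ∈ T2, (if m + m' = 0 then (m:ℂ) else 0) * (p m * q m') := by
        refine Finset.sum_congr rfl fun m hm => Finset.sum_congr rfl fun m' hm' => ?_
        exact l3 m hm m' hm'
    _ = ∑ m ∈ T1, ∑ m' ∈ T2, (if m' = -m then (m:ℂ) * (p m * q m') else 0) := by
        refine Finset.sum_congr rfl fun m _ => Finset.sum_congr rfl fun m' _ => ?_
        by_cases h : m + m' = 0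
        · rw [if_pos h, if_pos (by omega)]
        · rw [if_neg h, if_neg (by omega), zero_mul]
    _ = ∑ m ∈ T1, (m:ℂ) * (p m * q (-m)) := by
        refine Finset.sum_congr rfl fun m hm => ?_
        rw [Finset.mem_Icc] at hm
        rw [Finset.sum_ite_eq' T2 (-m) (fun m' => (m:ℂ) * (p m * q m')),
          if_pos (by simp only [hT2, Finset.mem_Icc]; omega)]
    _ = resC p q := by
        symm
        apply finsum_eq_sum_of_support_subset
        intro m hm
        simp only [Function.mem_support] at hm
        have h1 : m ≤ Np := by
          by_contra h; exact hm (by rw [hp m (by omega), zero_mul, mul_zero])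
        have h2 : -m ≤ Nq := by
          by_contra h; exact hm (by rw [hq _ (by omega), mul_zero, mul_zero])
        simp only [hT1, Finset.coe_Icc, Set.mem_Icc]; omega

end AuxSeq3

section AuxVec

open Finset

variable {𝔤 : Type} [LieRing 𝔤] [LieAlgebra ℂ 𝔤] {Γ : Type} [Group Γ]

lemma HomToG.invA_ne_zero (Ψ : HomToG Γ) (g : Γ) : Ψ.invA g ≠ 0 :=
  inv_ne_zero (Units.ne_zero _)

lemma HomToG.invA_one (Ψ : HomToG Γ) : Ψ.invA 1 = 1 := by
  rw [HomToG.invA, map_one, Units.val_one, inv_one]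

lemma HomToG.invB_one (Ψ : HomToG Γ) : Ψ.invB 1 = 0 := by
  rw [HomToG.invB, Ψ.B_one, mul_zero]

lemma HomToG.invA_comp (Ψ : HomToG Γ) (g h : Γ) :
    Ψ.invA h * Ψ.invA g = Ψ.invA (g * h) := by
  rw [HomToG.invA, HomToG.invA, HomToG.invA, map_mul, Units.val_mul, mul_inv]
  ring

lemma HomToG.invB_comp (Ψ : HomToG Γ) (g h : Γ) :
    Ψ.invA h * Ψ.invB g + Ψ.invB h = Ψ.invB (g * h) := by
  have hg : (Ψ.A g : ℂ) ≠ 0 := Units.ne_zero _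
  have hh : (Ψ.A h : ℂ) ≠ 0 := Units.ne_zero _
  rw [HomToG.invA, HomToG.invB, HomToG.invB, HomToG.invB, Ψ.B_mul, map_mul, Units.val_mul]
  field_simp
  ring

/-- upper truncation of the coefficient function -/
def UBd (x : (ℤ → 𝔤) × ℂ) : Prop := ∃ N : ℤ, ∀ n : ℤ, N < n → x.1 n = 0

lemma UBd_of_mem {x : (ℤ → 𝔤) × ℂ} (hx : x ∈ Ehat 𝔤) : UBd x := by
  refine Submodule.span_induction ?_ ?_ ?_ ?_ hx
  · rintro y (⟨a, p, ⟨N, hN⟩, rfl⟩ | rfl)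
    · exact ⟨N, fun n hn => by show p n • a = 0; rw [hN n hn, zero_smul]⟩
    · exact ⟨0, fun n _ => rfl⟩
  · exact ⟨0, fun n _ => rfl⟩
  · rintro y z - - ⟨N1, h1⟩ ⟨N2, h2⟩
    exact ⟨max N1 N2, fun n hn => by
      show y.1 n + z.1 n = 0
      rw [h1 n (by omega), h2 n (by omega), add_zero]⟩
  · rintro c y - ⟨N, hN⟩
    exact ⟨N, fun n hn => by
      show c • y.1 n = 0
      rw [hN n hn, smul_zero]⟩

lemma UBd_kvec : UBd (kvec (𝔤 := 𝔤)) := ⟨0, fun n _ => rfl⟩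

lemma UBd_elemT_of_trunc {a : 𝔤} {p : ℤ → ℂ} (hp : KTrunc p) : UBd (elemT a p) := by
  obtain ⟨N, hN⟩ := hp
  exact ⟨N, fun n hn => by show p n • a = 0; rw [hN n hn, zero_smul]⟩

variable (ρ : Γ →* (𝔤 ≃ₗ[ℂ] 𝔤)) (Ψ : HomToG Γ)

lemma actG_supp (g : Γ) (x : (ℤ → 𝔤) × ℂ) {N : ℤ} (hx : ∀ m, N < m → x.1 m = 0) (n : ℤ) :
    (Function.support fun m => gco (Ψ.invA g) (Ψ.invB g) m n • (ρ g (x.1 m)))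
      ⊆ ↑(Finset.Icc n N) := by
  intro m hm
  simp only [Function.mem_support] at hm
  have h1 : n ≤ m := by
    by_contra h
    exact hm (by rw [gco_of_lt (show m < n by omega), zero_smul])
  have h2 : m ≤ N := by
    by_contra h
    exact hm (by rw [hx m (by omega), map_zero, smul_zero])
  simp only [Finset.coe_Icc, Set.mem_Icc]; omega

lemma actG_UB {g : Γ} {x : (ℤ → 𝔤) × ℂ} (hx : UBd x) : UBd (actG ρ Ψ g x) := by
  obtain ⟨N, hN⟩ := hx
  refine ⟨N, fun n hn => ?_⟩
  show (∑ᶠ m : ℤ, gco (Ψ.invA g) (Ψ.invB g) m n • (ρ g (x.1 m))) = 0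
  apply finsum_eq_zero_of_forall_eq_zero
  intro m
  rcases le_or_gt m N with h | h
  · rw [gco_of_lt (show m < n by omega), zero_smul]
  · rw [hN m h, map_zero, smul_zero]

lemma actG_add {g : Γ} {x y : (ℤ → 𝔤) × ℂ} (hx : UBd x) (hy : UBd y) :
    actG ρ Ψ g (x + y) = actG ρ Ψ g x + actG ρ Ψ g y := by
  obtain ⟨N1, h1⟩ := hx
  obtain ⟨N2, h2⟩ := hy
  refine Prod.ext ?_ rfl
  funext n
  show (∑ᶠ m : ℤ, gco (Ψ.invA g) (Ψ.invB g) m n • (ρ g ((x + y).1 m)))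
    = (∑ᶠ m : ℤ, gco (Ψ.invA g) (Ψ.invB g) m n • (ρ g (x.1 m)))
      + ∑ᶠ m : ℤ, gco (Ψ.invA g) (Ψ.invB g) m n • (ρ g (y.1 m))
  have he : ∀ m : ℤ, gco (Ψ.invA g) (Ψ.invB g) m n • (ρ g ((x + y).1 m))
      = gco (Ψ.invA g) (Ψ.invB g) m n • (ρ g (x.1 m))
        + gco (Ψ.invA g) (Ψ.invB g) m n • (ρ g (y.1 m)) := by
    intro m
    show gco (Ψ.invA g) (Ψ.invB g) m n • (ρ g (x.1 m + y.1 m)) = _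
    rw [map_add, smul_add]
  rw [finsum_congr he]
  exact finsum_add_distrib
    (Set.Finite.subset (Finset.finite_toSet _) (actG_supp ρ Ψ g x h1 n))
    (Set.Finite.subset (Finset.finite_toSet _) (actG_supp ρ Ψ g y h2 n))

lemma actG_smul (g : Γ) (c : ℂ) (x : (ℤ → 𝔤) × ℂ) :
    actG ρ Ψ g (c • x) = c • actG ρ Ψ g x := by
  refine Prod.ext ?_ rfl
  funext n
  show (∑ᶠ m : ℤ, gco (Ψ.invA g) (Ψ.invB g) m n • (ρ g ((c • x).1 m)))
    = c • ∑ᶠ m : ℤ, gco (Ψ.invA g) (Ψ.invB g) m n • (ρ g (x.1 m))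
  rw [smul_finsum]
  apply finsum_congr
  intro m
  show gco (Ψ.invA g) (Ψ.invB g) m n • (ρ g (c • x.1 m)) = _
  rw [map_smul, smul_comm]

lemma actG_zero (g : Γ) : actG ρ Ψ g (0 : (ℤ → 𝔤) × ℂ) = 0 := by
  refine Prod.ext ?_ rfl
  funext n
  show (∑ᶠ m : ℤ, gco (Ψ.invA g) (Ψ.invB g) m n • (ρ g ((0 : (ℤ → 𝔤) × ℂ).1 m))) = 0
  apply finsum_eq_zero_of_forall_eq_zero
  intro m
  show gco (Ψ.invA g) (Ψ.invB g) m n • (ρ g 0) = 0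
  rw [map_zero, smul_zero]

lemma actG_elemT (g : Γ) (a : 𝔤) (p : ℤ → ℂ) :
    actG ρ Ψ g (elemT a p) = elemT (ρ g a) (substK (Ψ.invA g) (Ψ.invB g) p) := by
  refine Prod.ext ?_ rfl
  funext n
  show (∑ᶠ m : ℤ, gco (Ψ.invA g) (Ψ.invB g) m n • (ρ g (p m • a)))
    = substK (Ψ.invA g) (Ψ.invB g) p n • ρ g a
  have he : ∀ m : ℤ, gco (Ψ.invA g) (Ψ.invB g) m n • (ρ g (p m • a))
      = (gco (Ψ.invA g) (Ψ.invB g) m n * p m) • ρ g a := by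
    intro m
    rw [map_smul, smul_smul]
  rw [finsum_congr he, ← finsum_smul]
  rfl

lemma actG_kvec (g : Γ) : actG ρ Ψ g (kvec (𝔤 := 𝔤)) = kvec := by
  refine Prod.ext ?_ rfl
  funext n
  show (∑ᶠ m : ℤ, gco (Ψ.invA g) (Ψ.invB g) m n • (ρ g ((0 : ℤ → 𝔤) m))) = (0 : ℤ → 𝔤) n
  apply finsum_eq_zero_of_forall_eq_zero
  intro m
  show gco (Ψ.invA g) (Ψ.invB g) m n • (ρ g 0) = 0
  rw [map_zero, smul_zero]

lemma actG_one (x : (ℤ → 𝔤) × ℂ) : actG ρ Ψ 1 x = x := by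
  refine Prod.ext ?_ rfl
  funext n
  show (∑ᶠ m : ℤ, gco (Ψ.invA 1) (Ψ.invB 1) m n • ((ρ 1) (x.1 m))) = x.1 n
  have he : ∀ m : ℤ, gco (Ψ.invA 1) (Ψ.invB 1) m n • ((ρ 1) (x.1 m))
      = if m = n then x.1 m else 0 := by
    intro m
    rw [Ψ.invA_one, Ψ.invB_one, gco_one_zero, map_one]
    by_cases h : m = n
    · rw [if_pos h, if_pos h, one_smul]; rfl
    · rw [if_neg h, if_neg h, zero_smul]
  rw [finsum_congr he, finsum_eq_single _ n (fun m hm => if_neg hm), if_pos rfl]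

end AuxVec

section AuxBr

variable {𝔤 : Type} [LieRing 𝔤] [LieAlgebra ℂ 𝔤] {Γ : Type} [Group Γ]
variable (Bf : 𝔤 →ₗ[ℂ] 𝔤 →ₗ[ℂ] ℂ)

lemma br_supp1 (x y : (ℤ → 𝔤) × ℂ) {N1 N2 : ℤ} (h1 : ∀ m, N1 < m → x.1 m = 0)
    (h2 : ∀ m, N2 < m → y.1 m = 0) (n : ℤ) :
    (Function.support fun i => ⁅x.1 i, y.1 (n - i)⁆) ⊆ ↑(Finset.Icc (n - N2) N1) := by
  intro i hi
  simp only [Function.mem_support] at hi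
  have ha : i ≤ N1 := by
    by_contra h; exact hi (by rw [h1 i (by omega), zero_lie])
  have hb : n - i ≤ N2 := by
    by_contra h; exact hi (by rw [h2 _ (by omega), lie_zero])
  simp only [Finset.coe_Icc, Set.mem_Icc]; omega

lemma br_supp2 (x y : (ℤ → 𝔤) × ℂ) {N1 N2 : ℤ} (h1 : ∀ m, N1 < m → x.1 m = 0)
    (h2 : ∀ m, N2 < m → y.1 m = 0) :
    (Function.support fun i : ℤ => (i : ℂ) * Bf (x.1 i) (y.1 (-i)))
      ⊆ ↑(Finset.Icc (-N2) N1) := by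
  intro i hi
  simp only [Function.mem_support] at hi
  have ha : i ≤ N1 := by
    by_contra h
    exact hi (by rw [h1 i (by omega), map_zero, LinearMap.zero_apply, mul_zero])
  have hb : -i ≤ N2 := by
    by_contra h
    exact hi (by rw [h2 _ (by omega), map_zero, mul_zero])
  simp only [Finset.coe_Icc, Set.mem_Icc]; omega

lemma br0_UB {x y : (ℤ → 𝔤) × ℂ} (hx : UBd x) (hy : UBd y) : UBd (br0 Bf x y) := by
  obtain ⟨N1, h1⟩ := hx
  obtain ⟨N2, h2⟩ := hy
  refine ⟨N1 + N2, fun n hn => ?_⟩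
  show (∑ᶠ i : ℤ, ⁅x.1 i, y.1 (n - i)⁆) = 0
  apply finsum_eq_zero_of_forall_eq_zero
  intro i
  rcases le_or_gt i N1 with h | h
  · rw [h2 _ (by omega), lie_zero]
  · rw [h1 i h, zero_lie]

lemma br0_add_left {x x' y : (ℤ → 𝔤) × ℂ} (hx : UBd x) (hx' : UBd x') (hy : UBd y) :
    br0 Bf (x + x') y = br0 Bf x y + br0 Bf x' y := by
  obtain ⟨N1, h1⟩ := hx
  obtain ⟨N1', h1'⟩ := hx'
  obtain ⟨N2, h2⟩ := hy
  refine Prod.ext ?_ ?_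
  · funext n
    show (∑ᶠ i : ℤ, ⁅(x + x').1 i, y.1 (n - i)⁆)
      = (∑ᶠ i : ℤ, ⁅x.1 i, y.1 (n - i)⁆) + ∑ᶠ i : ℤ, ⁅x'.1 i, y.1 (n - i)⁆
    have he : ∀ i : ℤ, ⁅(x + x').1 i, y.1 (n - i)⁆
        = ⁅x.1 i, y.1 (n - i)⁆ + ⁅x'.1 i, y.1 (n - i)⁆ := by
      intro i
      show ⁅x.1 i + x'.1 i, y.1 (n - i)⁆ = _
      rw [add_lie]
    rw [finsum_congr he]
    exact finsum_add_distrib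
      (Set.Finite.subset (Finset.finite_toSet _) (br_supp1 x y h1 h2 n))
      (Set.Finite.subset (Finset.finite_toSet _) (br_supp1 x' y h1' h2 n))
  · show (∑ᶠ i : ℤ, (i : ℂ) * Bf ((x + x').1 i) (y.1 (-i)))
      = (∑ᶠ i : ℤ, (i : ℂ) * Bf (x.1 i) (y.1 (-i)))
        + ∑ᶠ i : ℤ, (i : ℂ) * Bf (x'.1 i) (y.1 (-i))
    have he : ∀ i : ℤ, (i : ℂ) * Bf ((x + x').1 i) (y.1 (-i))
        = (i : ℂ) * Bf (x.1 i) (y.1 (-i)) + (i : ℂ) * Bf (x'.1 i) (y.1 (-i)) := by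
      intro i
      show (i : ℂ) * Bf (x.1 i + x'.1 i) (y.1 (-i)) = _
      rw [map_add, LinearMap.add_apply, mul_add]
    rw [finsum_congr he]
    exact finsum_add_distrib
      (Set.Finite.subset (Finset.finite_toSet _) (br_supp2 Bf x y h1 h2))
      (Set.Finite.subset (Finset.finite_toSet _) (br_supp2 Bf x' y h1' h2))

lemma br0_add_right {x y y' : (ℤ → 𝔤) × ℂ} (hx : UBd x) (hy : UBd y) (hy' : UBd y') :
    br0 Bf x (y + y') = br0 Bf x y + br0 Bf x y' := by
  obtain ⟨N1, h1⟩ := hx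
  obtain ⟨N2, h2⟩ := hy
  obtain ⟨N2', h2'⟩ := hy'
  refine Prod.ext ?_ ?_
  · funext n
    show (∑ᶠ i : ℤ, ⁅x.1 i, (y + y').1 (n - i)⁆)
      = (∑ᶠ i : ℤ, ⁅x.1 i, y.1 (n - i)⁆) + ∑ᶠ i : ℤ, ⁅x.1 i, y'.1 (n - i)⁆
    have he : ∀ i : ℤ, ⁅x.1 i, (y + y').1 (n - i)⁆
        = ⁅x.1 i, y.1 (n - i)⁆ + ⁅x.1 i, y'.1 (n - i)⁆ := by
      intro i
      show ⁅x.1 i, y.1 (n - i) + y'.1 (n - i)⁆ = _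
      rw [lie_add]
    rw [finsum_congr he]
    exact finsum_add_distrib
      (Set.Finite.subset (Finset.finite_toSet _) (br_supp1 x y h1 h2 n))
      (Set.Finite.subset (Finset.finite_toSet _) (br_supp1 x y' h1 h2' n))
  · show (∑ᶠ i : ℤ, (i : ℂ) * Bf (x.1 i) ((y + y').1 (-i)))
      = (∑ᶠ i : ℤ, (i : ℂ) * Bf (x.1 i) (y.1 (-i)))
        + ∑ᶠ i : ℤ, (i : ℂ) * Bf (x.1 i) (y'.1 (-i))
    have he : ∀ i : ℤ, (i : ℂ) * Bf (x.1 i) ((y + y').1 (-i))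
        = (i : ℂ) * Bf (x.1 i) (y.1 (-i)) + (i : ℂ) * Bf (x.1 i) (y'.1 (-i)) := by
      intro i
      show (i : ℂ) * Bf (x.1 i) (y.1 (-i) + y'.1 (-i)) = _
      rw [map_add, mul_add]
    rw [finsum_congr he]
    exact finsum_add_distrib
      (Set.Finite.subset (Finset.finite_toSet _) (br_supp2 Bf x y h1 h2))
      (Set.Finite.subset (Finset.finite_toSet _) (br_supp2 Bf x y' h1 h2'))

lemma br0_smul_left (c : ℂ) (x y : (ℤ → 𝔤) × ℂ) :
    br0 Bf (c • x) y = c • br0 Bf x y := by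
  refine Prod.ext ?_ ?_
  · funext n
    show (∑ᶠ i : ℤ, ⁅(c • x).1 i, y.1 (n - i)⁆) = c • ∑ᶠ i : ℤ, ⁅x.1 i, y.1 (n - i)⁆
    rw [smul_finsum]
    apply finsum_congr
    intro i
    show ⁅c • x.1 i, y.1 (n - i)⁆ = _
    rw [smul_lie]
  · show (∑ᶠ i : ℤ, (i : ℂ) * Bf ((c • x).1 i) (y.1 (-i)))
      = c • ∑ᶠ i : ℤ, (i : ℂ) * Bf (x.1 i) (y.1 (-i))
    rw [smul_finsum]
    apply finsum_congr
    intro i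
    show (i : ℂ) * Bf (c • x.1 i) (y.1 (-i)) = c • ((i : ℂ) * Bf (x.1 i) (y.1 (-i)))
    rw [map_smul, LinearMap.smul_apply, smul_eq_mul, smul_eq_mul]
    ring

lemma br0_smul_right (c : ℂ) (x y : (ℤ → 𝔤) × ℂ) :
    br0 Bf x (c • y) = c • br0 Bf x y := by
  refine Prod.ext ?_ ?_
  · funext n
    show (∑ᶠ i : ℤ, ⁅x.1 i, (c • y).1 (n - i)⁆) = c • ∑ᶠ i : ℤ, ⁅x.1 i, y.1 (n - i)⁆
    rw [smul_finsum]
    apply finsum_congr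
    intro i
    show ⁅x.1 i, c • y.1 (n - i)⁆ = _
    rw [lie_smul]
  · show (∑ᶠ i : ℤ, (i : ℂ) * Bf (x.1 i) ((c • y).1 (-i)))
      = c • ∑ᶠ i : ℤ, (i : ℂ) * Bf (x.1 i) (y.1 (-i))
    rw [smul_finsum]
    apply finsum_congr
    intro i
    show (i : ℂ) * Bf (x.1 i) (c • y.1 (-i)) = c • ((i : ℂ) * Bf (x.1 i) (y.1 (-i)))
    rw [map_smul, smul_eq_mul, smul_eq_mul]
    ring

lemma br0_zero_left (y : (ℤ → 𝔤) × ℂ) : br0 Bf 0 y = 0 := by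
  refine Prod.ext ?_ ?_
  · funext n
    show (∑ᶠ i : ℤ, ⁅(0 : (ℤ → 𝔤) × ℂ).1 i, y.1 (n - i)⁆) = 0
    apply finsum_eq_zero_of_forall_eq_zero
    intro i
    show ⁅(0 : 𝔤), y.1 (n - i)⁆ = 0
    rw [zero_lie]
  · show (∑ᶠ i : ℤ, (i : ℂ) * Bf ((0 : (ℤ → 𝔤) × ℂ).1 i) (y.1 (-i))) = 0
    apply finsum_eq_zero_of_forall_eq_zero
    intro i
    show (i : ℂ) * Bf (0 : 𝔤) (y.1 (-i)) = 0
    rw [map_zero, LinearMap.zero_apply, mul_zero]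

lemma br0_kvec_left (y : (ℤ → 𝔤) × ℂ) : br0 Bf kvec y = 0 := by
  refine Prod.ext ?_ ?_
  · funext n
    show (∑ᶠ i : ℤ, ⁅(0 : ℤ → 𝔤) i, y.1 (n - i)⁆) = 0
    apply finsum_eq_zero_of_forall_eq_zero
    intro i
    show ⁅(0 : 𝔤), y.1 (n - i)⁆ = 0
    rw [zero_lie]
  · show (∑ᶠ i : ℤ, (i : ℂ) * Bf ((0 : ℤ → 𝔤) i) (y.1 (-i))) = 0
    apply finsum_eq_zero_of_forall_eq_zero
    intro i
    show (i : ℂ) * Bf (0 : 𝔤) (y.1 (-i)) = 0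
    rw [map_zero, LinearMap.zero_apply, mul_zero]

lemma br0_kvec_right (x : (ℤ → 𝔤) × ℂ) : br0 Bf x kvec = 0 := by
  refine Prod.ext ?_ ?_
  · funext n
    show (∑ᶠ i : ℤ, ⁅x.1 i, (0 : ℤ → 𝔤) (n - i)⁆) = 0
    apply finsum_eq_zero_of_forall_eq_zero
    intro i
    show ⁅x.1 i, (0 : 𝔤)⁆ = 0
    rw [lie_zero]
  · show (∑ᶠ i : ℤ, (i : ℂ) * Bf (x.1 i) ((0 : ℤ → 𝔤) (-i))) = 0
    apply finsum_eq_zero_of_forall_eq_zero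
    intro i
    show (i : ℂ) * Bf (x.1 i) (0 : 𝔤) = 0
    rw [map_zero, mul_zero]

lemma br0_elemT (a b : 𝔤) (p q : ℤ → ℂ) :
    br0 Bf (elemT a p) (elemT b q)
      = elemT ⁅a, b⁆ (convC p q) + (resC p q * Bf a b) • kvec := by
  refine Prod.ext ?_ ?_
  · funext n
    have he : ∀ i : ℤ, ⁅(elemT a p).1 i, (elemT b q).1 (n - i)⁆
        = (p i * q (n - i)) • ⁅a, b⁆ := by
      intro i
      show ⁅p i • a, q (n - i) • b⁆ = _
      rw [smul_lie, lie_smul, smul_smul]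
    have lhs : (br0 Bf (elemT a p) (elemT b q)).1 n = convC p q n • ⁅a, b⁆ := by
      show (∑ᶠ i : ℤ, ⁅(elemT a p).1 i, (elemT b q).1 (n - i)⁆) = _
      rw [finsum_congr he, ← finsum_smul]
      rfl
    have rhs : (elemT ⁅a, b⁆ (convC p q) + (resC p q * Bf a b) • kvec).1 n
        = convC p q n • ⁅a, b⁆ := by
      show convC p q n • ⁅a, b⁆ + (resC p q * Bf a b) • (0 : 𝔤) = _
      rw [smul_zero, add_zero]
    rw [lhs, rhs]
  · have he : ∀ i : ℤ, (i : ℂ) * Bf ((elemT a p).1 i) ((elemT b q).1 (-i))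
        = ((i : ℂ) * (p i * q (-i))) • Bf a b := by
      intro i
      show (i : ℂ) * Bf (p i • a) (q (-i) • b) = _
      simp only [map_smul, LinearMap.smul_apply, smul_eq_mul]
      ring
    have lhs : (br0 Bf (elemT a p) (elemT b q)).2 = resC p q • Bf a b := by
      show (∑ᶠ i : ℤ, (i : ℂ) * Bf ((elemT a p).1 i) ((elemT b q).1 (-i))) = _
      rw [finsum_congr he, ← finsum_smul]
      rfl
    have rhs : (elemT ⁅a, b⁆ (convC p q) + (resC p q * Bf a b) • kvec).2
        = resC p q • Bf a b := by
      show (0 : ℂ) + (resC p q * Bf a b) • (1 : ℂ) = _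
      rw [smul_eq_mul, smul_eq_mul, mul_one, zero_add]
    rw [lhs, rhs]

end AuxBr

section AuxMore

variable {𝔤 : Type} [LieRing 𝔤] [LieAlgebra ℂ 𝔤] {Γ : Type} [Group Γ]

lemma UBd_zero : UBd (0 : (ℤ → 𝔤) × ℂ) := ⟨0, fun _ _ => rfl⟩

lemma UBd_add {x y : (ℤ → 𝔤) × ℂ} (hx : UBd x) (hy : UBd y) : UBd (x + y) := by
  obtain ⟨N1, h1⟩ := hx; obtain ⟨N2, h2⟩ := hy
  exact ⟨max N1 N2, fun n hn => by
    show x.1 n + y.1 n = 0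
    rw [h1 n (by omega), h2 n (by omega), add_zero]⟩

lemma UBd_smul (c : ℂ) {x : (ℤ → 𝔤) × ℂ} (hx : UBd x) : UBd (c • x) := by
  obtain ⟨N, hN⟩ := hx
  exact ⟨N, fun n hn => by show c • x.1 n = 0; rw [hN n hn, smul_zero]⟩

lemma elemT_zero (r : ℤ → ℂ) : elemT (0 : 𝔤) r = 0 := by
  refine Prod.ext ?_ rfl
  funext n
  show r n • (0 : 𝔤) = 0
  rw [smul_zero]

variable (Bf : 𝔤 →ₗ[ℂ] 𝔤 →ₗ[ℂ] ℂ)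

lemma br0_zero_right (x : (ℤ → 𝔤) × ℂ) : br0 Bf x 0 = 0 := by
  refine Prod.ext ?_ ?_
  · funext n
    show (∑ᶠ i : ℤ, ⁅x.1 i, (0 : (ℤ → 𝔤) × ℂ).1 (n - i)⁆) = 0
    apply finsum_eq_zero_of_forall_eq_zero
    intro i
    show ⁅x.1 i, (0 : 𝔤)⁆ = 0
    rw [lie_zero]
  · show (∑ᶠ i : ℤ, (i : ℂ) * Bf (x.1 i) ((0 : (ℤ → 𝔤) × ℂ).1 (-i))) = 0
    apply finsum_eq_zero_of_forall_eq_zero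
    intro i
    show (i : ℂ) * Bf (x.1 i) (0 : 𝔤) = 0
    rw [map_zero, mul_zero]

end AuxMore

/-- proof of Proposition 3.1: Under the standing assumptions on
`(𝔤, ⟨·,·⟩, Γ)`, the assignment `g ⬝ (a⊗p(t) + λk) = ga ⊗ p(g⁻¹(t)) + λk` defines a
left action of `Γ` on the Lie algebra `ĝ(∞) = (𝔤⊗ℂ((t⁻¹))) ⊕ ℂk` (with the
untwisted bracket `[a⊗p, b⊗q] = [a,b]⊗pq + Res_t p'q ⟨a,b⟩ k`) by Lie algebra
automorphisms, and for any `u, v ∈ ĝ(∞)`, `[gu, v] = 0` for all but finitely many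
`g ∈ Γ`. -/
theorem gamma_action_on_completed_affine {Γ 𝔤 : Type} [Group Γ]
    [LieRing 𝔤] [LieAlgebra ℂ 𝔤]
    (Bf : 𝔤 →ₗ[ℂ] 𝔤 →ₗ[ℂ] ℂ)
    (hsymm : ∀ a b : 𝔤, Bf a b = Bf b a)
    (hinv : ∀ a b c : 𝔤, Bf ⁅a, b⁆ c = Bf a ⁅b, c⁆)
    (hnondeg : ∀ a : 𝔤, (∀ b : 𝔤, Bf a b = 0) → a = 0)
    (ρ : Γ →* (𝔤 ≃ₗ[ℂ] 𝔤))
    (hbr : ∀ (g : Γ) (a b : 𝔤), ρ g ⁅a, b⁆ = ⁅ρ g a, ρ g b⁆)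
    (hform : ∀ (g : Γ) (a b : 𝔤), Bf (ρ g a) (ρ g b) = Bf a b)
    (hfin : ∀ a b : 𝔤, {g : Γ | ⁅ρ g a, b⁆ ≠ 0 ∨ Bf (ρ g a) b ≠ 0}.Finite)
    (Ψ : HomToG Γ) :
    -- the action preserves ĝ(∞) and is linear on it
    (∀ (g : Γ), ∀ x ∈ Ehat 𝔤, actG ρ Ψ g x ∈ Ehat 𝔤) ∧
    (∀ (g : Γ), ∀ x ∈ Ehat 𝔤, ∀ y ∈ Ehat 𝔤,
      actG ρ Ψ g (x + y) = actG ρ Ψ g x + actG ρ Ψ g y) ∧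
    (∀ (g : Γ) (c : ℂ), ∀ x ∈ Ehat 𝔤, actG ρ Ψ g (c • x) = c • actG ρ Ψ g x) ∧
    -- it is a left group action
    (∀ x ∈ Ehat 𝔤, actG ρ Ψ 1 x = x) ∧
    (∀ (g h : Γ), ∀ x ∈ Ehat 𝔤, actG ρ Ψ (g * h) x = actG ρ Ψ g (actG ρ Ψ h x)) ∧
    -- by automorphisms of the Lie algebra ĝ(∞)
    (∀ (g : Γ), ∀ x ∈ Ehat 𝔤, ∀ y ∈ Ehat 𝔤,
      br0 Bf (actG ρ Ψ g x) (actG ρ Ψ g y) = actG ρ Ψ g (br0 Bf x y)) ∧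
    -- local finiteness: [gu, v] = 0 for all but finitely many g
    (∀ x ∈ Ehat 𝔤, ∀ y ∈ Ehat 𝔤, {g : Γ | br0 Bf (actG ρ Ψ g x) y ≠ 0}.Finite) := by
  
  constructor
  · -- part 1: actG preserves Ehat
    intro g x hx
    refine (Submodule.span_induction (p := fun x _ => UBd x ∧ actG ρ Ψ g x ∈ Ehat 𝔤)
      ?_ ?_ ?_ ?_ hx).2
    · rintro y (⟨a, p, hp, rfl⟩ | rfl)
      · exact ⟨UBd_elemT_of_trunc hp, by
          rw [actG_elemT]; exact elemT_mem _ _ (substK_trunc hp _ _)⟩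
      · exact ⟨UBd_kvec, by rw [actG_kvec]; exact kvec_mem⟩
    · exact ⟨UBd_zero, by rw [actG_zero]; exact Submodule.zero_mem _⟩
    · rintro y z - - ⟨hy1, hy2⟩ ⟨hz1, hz2⟩
      exact ⟨UBd_add hy1 hz1, by
        rw [actG_add ρ Ψ hy1 hz1]; exact Submodule.add_mem _ hy2 hz2⟩
    · rintro c y - ⟨hy1, hy2⟩
      exact ⟨UBd_smul c hy1, by
        rw [actG_smul]; exact Submodule.smul_mem _ _ hy2⟩
  constructor
  · -- part 2: additivity
    intro g x hx y hy
    exact actG_add ρ Ψ (UBd_of_mem hx) (UBd_of_mem hy)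
  constructor
  · -- part 3: smul
    intro g c x _
    exact actG_smul ρ Ψ g c x
  constructor
  · -- part 4: identity
    intro x _
    exact actG_one ρ Ψ x
  constructor
  · -- part 5: composition
    intro g h x hx
    refine (Submodule.span_induction
      (p := fun x _ => UBd x ∧ actG ρ Ψ (g * h) x = actG ρ Ψ g (actG ρ Ψ h x))
      ?_ ?_ ?_ ?_ hx).2
    · rintro y (⟨a, p, hp, rfl⟩ | rfl)
      · refine ⟨UBd_elemT_of_trunc hp, ?_⟩
        have hmul : ρ (g * h) a = ρ g (ρ h a) := by rw [map_mul]; rfl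
        rw [actG_elemT, actG_elemT, actG_elemT,
          substK_substK (Ψ.invA_ne_zero h) (Ψ.invA_ne_zero g) (Ψ.invB h) (Ψ.invB g) hp,
          Ψ.invA_comp, Ψ.invB_comp, hmul]
      · exact ⟨UBd_kvec, by rw [actG_kvec, actG_kvec, actG_kvec]⟩
    · exact ⟨UBd_zero, by rw [actG_zero, actG_zero, actG_zero]⟩
    · rintro y z - - ⟨hy1, hy2⟩ ⟨hz1, hz2⟩
      refine ⟨UBd_add hy1 hz1, ?_⟩
      rw [actG_add ρ Ψ hy1 hz1, actG_add ρ Ψ hy1 hz1, hy2, hz2,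
        actG_add ρ Ψ (actG_UB ρ Ψ hy1) (actG_UB ρ Ψ hz1)]
    · rintro c y - ⟨hy1, hy2⟩
      exact ⟨UBd_smul c hy1, by rw [actG_smul, actG_smul, hy2, actG_smul]⟩
  constructor
  · -- part 6: automorphism property
    intro g x hx
    refine fun y hy => ((Submodule.span_induction
      (p := fun x _ => UBd x ∧ ∀ y ∈ Ehat 𝔤,
        br0 Bf (actG ρ Ψ g x) (actG ρ Ψ g y) = actG ρ Ψ g (br0 Bf x y))
      ?_ ?_ ?_ ?_ hx).2) y hy
    · rintro x0 (⟨a, p, hp, rfl⟩ | rfl)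
      · refine ⟨UBd_elemT_of_trunc hp, fun y hy => ?_⟩
        have hx0U : UBd (elemT a p) := UBd_elemT_of_trunc hp
        refine (Submodule.span_induction
          (p := fun y _ => UBd y ∧ br0 Bf (actG ρ Ψ g (elemT a p)) (actG ρ Ψ g y)
            = actG ρ Ψ g (br0 Bf (elemT a p) y)) ?_ ?_ ?_ ?_ hy).2
        · rintro y0 (⟨b, q, hq, rfl⟩ | rfl)
          · refine ⟨UBd_elemT_of_trunc hq, ?_⟩
            obtain ⟨Np, hNp⟩ := hp
            obtain ⟨Nq, hNq⟩ := hq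
            rw [actG_elemT, actG_elemT, br0_elemT, br0_elemT,
              convC_substK (Ψ.invA_ne_zero g) (Ψ.invB g) hNp hNq,
              resC_substK (Ψ.invA_ne_zero g) (Ψ.invB g) hNp hNq,
              ← hbr g a b, hform g a b,
              actG_add ρ Ψ (UBd_elemT_of_trunc (convC_trunc ⟨Np, hNp⟩ ⟨Nq, hNq⟩))
                (UBd_smul _ UBd_kvec),
              actG_elemT, actG_smul, actG_kvec]
          · refine ⟨UBd_kvec, ?_⟩
            rw [actG_kvec, br0_kvec_right, br0_kvec_right, actG_zero]
        · exact ⟨UBd_zero, by rw [actG_zero, br0_zero_right, br0_zero_right, actG_zero]⟩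
        · rintro y1 y2 - - ⟨h1, ih1⟩ ⟨h2, ih2⟩
          refine ⟨UBd_add h1 h2, ?_⟩
          rw [actG_add ρ Ψ h1 h2,
            br0_add_right Bf (actG_UB ρ Ψ hx0U) (actG_UB ρ Ψ h1) (actG_UB ρ Ψ h2),
            ih1, ih2, br0_add_right Bf hx0U h1 h2,
            actG_add ρ Ψ (br0_UB Bf hx0U h1) (br0_UB Bf hx0U h2)]
        · rintro c y0 - ⟨h1, ih⟩
          exact ⟨UBd_smul c h1, by
            rw [actG_smul, br0_smul_right, ih, br0_smul_right, actG_smul]⟩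
      · refine ⟨UBd_kvec, fun y hy => ?_⟩
        rw [actG_kvec, br0_kvec_left, br0_kvec_left, actG_zero]
    · exact ⟨UBd_zero, fun y hy => by
        rw [actG_zero, br0_zero_left, br0_zero_left, actG_zero]⟩
    · rintro x1 x2 - - ⟨h1, ih1⟩ ⟨h2, ih2⟩
      refine ⟨UBd_add h1 h2, fun y hy => ?_⟩
      have hyU := UBd_of_mem hy
      rw [actG_add ρ Ψ h1 h2,
        br0_add_left Bf (actG_UB ρ Ψ h1) (actG_UB ρ Ψ h2) (actG_UB ρ Ψ hyU),
        ih1 y hy, ih2 y hy, br0_add_left Bf h1 h2 hyU,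
        actG_add ρ Ψ (br0_UB Bf h1 hyU) (br0_UB Bf h2 hyU)]
    · rintro c x0 - ⟨h1, ih⟩
      exact ⟨UBd_smul c h1, fun y hy => by
        rw [actG_smul, br0_smul_left, ih y hy, br0_smul_left, actG_smul]⟩
  · -- part 7: local finiteness
    intro x hx
    refine fun y hy => ((Submodule.span_induction
      (p := fun x _ => UBd x ∧ ∀ y ∈ Ehat 𝔤,
        {g : Γ | br0 Bf (actG ρ Ψ g x) y ≠ 0}.Finite) ?_ ?_ ?_ ?_ hx).2) y hy
    · rintro x0 (⟨a, p, hp, rfl⟩ | rfl)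
      · refine ⟨UBd_elemT_of_trunc hp, fun y hy => ?_⟩
        have hx0U : UBd (elemT a p) := UBd_elemT_of_trunc hp
        refine (Submodule.span_induction
          (p := fun y _ => UBd y ∧
            {g : Γ | br0 Bf (actG ρ Ψ g (elemT a p)) y ≠ 0}.Finite) ?_ ?_ ?_ ?_ hy).2
        · rintro y0 (⟨b, q, hq, rfl⟩ | rfl)
          · refine ⟨UBd_elemT_of_trunc hq, ?_⟩
            refine Set.Finite.subset (hfin a b) ?_
            intro g hg
            simp only [Set.mem_setOf_eq] at hg ⊢
            by_contra hc
            push_neg at hc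
            apply hg
            rw [actG_elemT, br0_elemT, hc.1, hc.2, elemT_zero, mul_zero, zero_smul,
              add_zero]
          · refine ⟨UBd_kvec, ?_⟩
            refine Set.Finite.subset Set.finite_empty fun g hg => ?_
            exact absurd (br0_kvec_right Bf _) hg
        · refine ⟨UBd_zero, ?_⟩
          refine Set.Finite.subset Set.finite_empty fun g hg => ?_
          exact absurd (br0_zero_right Bf _) hg
        · rintro y1 y2 - - ⟨h1, ih1⟩ ⟨h2, ih2⟩
          refine ⟨UBd_add h1 h2, ?_⟩
          refine Set.Finite.subset (ih1.union ih2) ?_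
          intro g hg
          simp only [Set.mem_setOf_eq, Set.mem_union] at hg ⊢
          by_contra hc
          push_neg at hc
          apply hg
          rw [br0_add_right Bf (actG_UB ρ Ψ hx0U) h1 h2, hc.1, hc.2, add_zero]
        · rintro c y0 - ⟨h1, ih⟩
          refine ⟨UBd_smul c h1, ?_⟩
          refine Set.Finite.subset ih ?_
          intro g hg
          simp only [Set.mem_setOf_eq] at hg ⊢
          by_contra hc
          apply hg
          rw [br0_smul_right, hc, smul_zero]
      · refine ⟨UBd_kvec, fun y hy => ?_⟩
        refine Set.Finite.subset Set.finite_empty fun g hg => ?_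
        refine absurd ?_ hg
        rw [actG_kvec, br0_kvec_left]
    · refine ⟨UBd_zero, fun y hy => ?_⟩
      refine Set.Finite.subset Set.finite_empty fun g hg => ?_
      refine absurd ?_ hg
      rw [actG_zero, br0_zero_left]
    · rintro x1 x2 - - ⟨h1, ih1⟩ ⟨h2, ih2⟩
      refine ⟨UBd_add h1 h2, fun y hy => ?_⟩
      refine Set.Finite.subset ((ih1 y hy).union (ih2 y hy)) ?_
      intro g hg
      simp only [Set.mem_setOf_eq, Set.mem_union] at hg ⊢
      by_contra hc
      push_neg at hc
      apply hg
      rw [actG_add ρ Ψ h1 h2,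
        br0_add_left Bf (actG_UB ρ Ψ h1) (actG_UB ρ Ψ h2) (UBd_of_mem hy),
        hc.1, hc.2, add_zero]
    · rintro c x0 - ⟨h1, ih⟩
      refine ⟨UBd_smul c h1, fun y hy => ?_⟩
      refine Set.Finite.subset (ih y hy) ?_
      intro g hg
      simp only [Set.mem_setOf_eq] at hg ⊢
      by_contra hc
      apply hg
      rw [actG_smul, br0_smul_left, hc, smul_zero]
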